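/- Let λx, λy, ε be positive reals, Nx, J positive integers, and a, b, c, d real constants. Suppose x : ℝ → ℝ^{Nx} and y : ℝ → ℝ^{Nx × J} are differentiable and satisfy, for all t, x_i'(t) = −(λy/J)·Σ_{j=1}^{J} [ (a + b·x_i(t))·y_{i,j}(t) + (c + d·x_i(t))·y_{i,j}(t)² ] and y_{i,j}'(t) = (λx/ε)·[ (a + c·y_{i,j}(t))·x_i(t) + (b + d·y_{i,j}(t))·x_i(t)² ]. Then the energy E(t) = (λx/(2ε))·Σ_{i=1}^{Nx} x_i(t)² + (λy/(2J))·Σ_{i=1}^{Nx} Σ_{j=1}^{J} y_{i,j}(t)² is constant in t. -/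

import Mathlib

/-- For the dynamics generated by the coupling terms of the two-scale Lorenz model alone,
the energy `E(t) = (λx/(2ε))·Σᵢ xᵢ(t)² + (λy/(2J))·Σᵢⱼ yᵢⱼ(t)²` is constant in time. -/
theorem coupling_energy_conservation
    (lx ly ε : ℝ) (hlx : 0 < lx) (hly : 0 < ly) (hε : 0 < ε)
    (Nx J : ℕ) (hNx : 0 < Nx) (hJ : 0 < J)
    (a b c d : ℝ) (x : Fin Nx → ℝ → ℝ) (y : Fin Nx → Fin J → ℝ → ℝ)
    (hx : ∀ i t, HasDerivAt (x i)
      (-(ly / J) * ∑ j, ((a + b * x i t) * y i j t + (c + d * x i t) * (y i j t) ^ 2)) t)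
    (hy : ∀ i j t, HasDerivAt (y i j)
      ((lx / ε) * ((a + c * y i j t) * x i t + (b + d * y i j t) * (x i t) ^ 2)) t) :
    ∀ t s : ℝ,
      (lx / (2 * ε)) * ∑ i, (x i t) ^ 2 + (ly / (2 * J)) * ∑ i, ∑ j, (y i j t) ^ 2
        = (lx / (2 * ε)) * ∑ i, (x i s) ^ 2 + (ly / (2 * J)) * ∑ i, ∑ j, (y i j s) ^ 2 := by
  set E : ℝ → ℝ := fun t =>
    (lx / (2 * ε)) * ∑ i, (x i t) ^ 2 + (ly / (2 * J)) * ∑ i, ∑ j, (y i j t) ^ 2 with hE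
  have hJ0 : (J : ℝ) ≠ 0 := Nat.cast_ne_zero.mpr hJ.ne'
  have hε0 : ε ≠ 0 := hε.ne'
  have key : ∀ t, HasDerivAt E 0 t := by
    intro t
    have H : HasDerivAt E
        ((lx / (2 * ε)) * ∑ i, ((2 : ℕ) * x i t ^ 1 *
            (-(ly / J) * ∑ j, ((a + b * x i t) * y i j t + (c + d * x i t) * (y i j t) ^ 2)))
          + (ly / (2 * J)) * ∑ i, ∑ j, ((2 : ℕ) * y i j t ^ 1 *
            ((lx / ε) * ((a + c * y i j t) * x i t + (b + d * y i j t) * (x i t) ^ 2)))) t := by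
      apply HasDerivAt.add
      · exact (HasDerivAt.fun_sum fun i _ => (hx i t).pow 2).const_mul _
      · exact (HasDerivAt.fun_sum fun i _ =>
          HasDerivAt.fun_sum fun j _ => (hy i j t).pow 2).const_mul _
    convert H using 1
    simp only [Finset.mul_sum, ← Finset.sum_add_distrib]
    rw [eq_comm]
    apply Finset.sum_eq_zero
    intro i _
    apply Finset.sum_eq_zero
    intro j _
    push_cast
    field_simp
    ring
  intro t s
  exact is_const_of_deriv_eq_zero (fun u => (key u).differentiableAt)
    (fun u => (key u).deriv) t s
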